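/- (Theorem 3.1, nonasymptotic risk bound) In the linear model y = Xβ* + ε with E[ε] = 0 and Cov(ε) = σ²I, assume bn ≤ λ_min(XᵀX) ≤ λ_max(XᵀX) ≤ Bn for constants 0 < b ≤ B. Then the weighted elastic-net estimator β̂_w(λ₂, λ₁) = argmin_β ‖y - Xβ‖₂² + λ₂‖β‖₂² + λ₁∑_j ŵ_j|β_j| satisfies E‖β̂_w(λ₂, λ₁) - β*‖₂² ≤ 4(λ₂²‖β*‖₂² + Bpnσ² + λ₁²E[∑_j ŵ_j²]) / (bn + λ₂)². -/

import Mathlib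

open Matrix MeasureTheory


-- quadratic form lower bound
lemma quadLB {n p : ℕ} (X : Matrix (Fin n) (Fin p) ℝ) (hH : (Xᵀ * X).IsHermitian)
    (c : ℝ) (heig : ∀ i, c ≤ hH.eigenvalues i) (x : Fin p → ℝ) :
    c * ∑ j, x j ^ 2 ≤ ∑ i, (X.mulVec x i) ^ 2 := by
  have hpsd : ((Xᵀ * X) - c • 1).PosSemidef := by
    have h1 : ((Xᵀ * X) - c • 1) =
        (hH.eigenvectorUnitary : Matrix (Fin p) (Fin p) ℝ) *
          (diagonal (fun i => hH.eigenvalues i - c)) *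
          (star (hH.eigenvectorUnitary : Matrix (Fin p) (Fin p) ℝ)) := by
      have hs := hH.spectral_theorem
      have hU : (hH.eigenvectorUnitary : Matrix (Fin p) (Fin p) ℝ) *
          (star (hH.eigenvectorUnitary : Matrix (Fin p) (Fin p) ℝ)) = 1 :=
        (Matrix.mem_unitaryGroup_iff).mp hH.eigenvectorUnitary.2
      conv_lhs => rw [hs]
      have hd : (diagonal (fun i => hH.eigenvalues i - c) : Matrix (Fin p) (Fin p) ℝ)
          = diagonal (RCLike.ofReal ∘ hH.eigenvalues) - c • 1 := by
        simp [Matrix.diagonal_sub, Matrix.smul_eq_diagonal_mul]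
      rw [hd]
      rw [Matrix.mul_sub, Matrix.sub_mul]
      congr 1
      rw [Matrix.mul_smul, Matrix.smul_mul, mul_one, hU]
    rw [h1]
    exact (Matrix.PosSemidef.diagonal (fun i => sub_nonneg.mpr (heig i))).mul_mul_conjTranspose_same _
  have h2 := hpsd.dotProduct_mulVec_nonneg x
  have h3 : star x ⬝ᵥ ((Xᵀ * X - c • 1) *ᵥ x) =
      (∑ i, (X.mulVec x i) ^ 2) - c * ∑ j, x j ^ 2 := by
    rw [sub_mulVec, smul_mulVec, one_mulVec, dotProduct_sub, ← mulVec_mulVec,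
      dotProduct_mulVec, vecMul_transpose]
    simp only [dotProduct, Pi.star_apply, star_trivial, Pi.smul_apply, smul_eq_mul,
      Finset.mul_sum, mulVec]
    congr 1
    · exact Finset.sum_congr rfl fun i _ => by rw [← Finset.mul_sum]; ring
    · exact Finset.sum_congr rfl fun i _ => by ring
  rw [h3] at h2
  linarith


lemma traceEq {n p : ℕ} (X : Matrix (Fin n) (Fin p) ℝ) (hH : (Xᵀ * X).IsHermitian) :
    ∑ j, ∑ i, X i j ^ 2 = ∑ j, hH.eigenvalues j := by
  have hU : (star (hH.eigenvectorUnitary : Matrix (Fin p) (Fin p) ℝ)) *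
      (hH.eigenvectorUnitary : Matrix (Fin p) (Fin p) ℝ) = 1 :=
    (Matrix.mem_unitaryGroup_iff').mp hH.eigenvectorUnitary.2
  have h1 : (Xᵀ * X).trace = ∑ j, hH.eigenvalues j := by
    conv_lhs => rw [hH.spectral_theorem]
    rw [Unitary.conjStarAlgAut_apply, Matrix.trace_mul_cycle, hU, Matrix.one_mul, Matrix.trace_diagonal]
    simp
  rw [← h1, Matrix.trace]
  simp [Matrix.diag, Matrix.mul_apply, sq]


lemma smallT {L Q : ℝ} (hQ : 0 ≤ Q) (h : ∀ t : ℝ, 0 < t → t ≤ 1 → 0 ≤ t * L + t ^ 2 * Q) :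
    0 ≤ L := by
  by_contra hL
  push_neg at hL
  set t : ℝ := min 1 (-L / (2 * (Q + 1))) with ht
  have hLpos : 0 < -L := by linarith
  have htpos : 0 < t := lt_min one_pos (by positivity)
  have ht1 : t ≤ 1 := min_le_left _ _
  have ht2 : t ≤ -L / (2 * (Q + 1)) := min_le_right _ _
  have key := h t htpos ht1
  have h3 : t * Q ≤ -L / 2 := by
    calc t * Q ≤ (-L / (2 * (Q + 1))) * Q := mul_le_mul_of_nonneg_right ht2 hQ
    _ ≤ -L / 2 := by
          rw [div_mul_eq_mul_div, div_le_div_iff₀ (by positivity) (by norm_num)]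
          nlinarith
  nlinarith [sq_nonneg t]

lemma pointwise_bound {n p : ℕ} (X : Matrix (Fin n) (Fin p) ℝ) (K l2 l1 : ℝ)
    (hK : 0 < K) (hl2 : 0 ≤ l2) (hl1 : 0 ≤ l1)
    (bstar m : Fin p → ℝ) (e : Fin n → ℝ) (wv : Fin p → ℝ) (hw : ∀ j, 0 ≤ wv j)
    (hquad : ∀ x : Fin p → ℝ, K * ∑ j, x j ^ 2 ≤ ∑ i, X.mulVec x i ^ 2)
    (hmin : ∀ β : Fin p → ℝ,
      (∑ i, ((X.mulVec bstar + e) i - X.mulVec m i) ^ 2)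
          + l2 * ∑ j, (m j) ^ 2 + l1 * ∑ j, wv j * |m j| ≤
        (∑ i, ((X.mulVec bstar + e) i - X.mulVec β i) ^ 2)
          + l2 * ∑ j, (β j) ^ 2 + l1 * ∑ j, wv j * |β j|) :
    (K + l2) ^ 2 * ∑ j, (m j - bstar j) ^ 2 ≤
      3 * ∑ j, (∑ i, X i j * e i) ^ 2 + 3 * l2 ^ 2 * ∑ j, (bstar j) ^ 2
        + (3 / 4) * l1 ^ 2 * ∑ j, wv j ^ 2 := by
  classical
  set d : Fin p → ℝ := fun j => m j - bstar j with hd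
  set a : Fin p → ℝ := fun j => ∑ i, X i j * e i with ha
  set v : Fin p → ℝ := fun j => if 0 ≤ d j then wv j else -wv j with hv
  -- basic mulVec facts
  have hXd : ∀ i, X.mulVec d i = X.mulVec m i - X.mulVec bstar i := by
    intro i
    simp only [mulVec, dotProduct, hd, mul_sub]
    rw [Finset.sum_sub_distrib]
  -- raw sums
  set S1 : ℝ := ∑ i, ((X.mulVec bstar + e) i - X.mulVec m i) ^ 2 with hS1
  set S2 : ℝ := ∑ i, e i * X.mulVec d i with hS2
  set S3 : ℝ := ∑ i, (X.mulVec d i) ^ 2 with hS3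
  set S4 : ℝ := ∑ j, m j * d j with hS4
  set S6 : ℝ := ∑ j, d j ^ 2 with hS6
  set Pm : ℝ := ∑ j, wv j * |m j| with hPm
  set Pb : ℝ := ∑ j, wv j * |bstar j| with hPb
  have hS6nn : 0 ≤ S6 := Finset.sum_nonneg fun j _ => sq_nonneg _
  have hS3nn : 0 ≤ S3 := Finset.sum_nonneg fun i _ => sq_nonneg _
  -- Step 1 : first-order inequality
  have hL : 0 ≤ 2 * S2 - 2 * S3 - 2 * l2 * S4 + l1 * (Pb - Pm) := by
    apply smallT (Q := S3 + l2 * S6) (add_nonneg hS3nn (mul_nonneg hl2 hS6nn))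
    intro t ht0 ht1
    have hmin' := hmin (fun j => m j - t * d j)
    -- expand the quadratic term
    have hXb : ∀ i, X.mulVec (fun j => m j - t * d j) i = X.mulVec m i - t * X.mulVec d i := by
      intro i
      simp only [mulVec, dotProduct, mul_sub, Finset.mul_sum]
      rw [Finset.sum_sub_distrib]
      congr 1
      exact Finset.sum_congr rfl fun k _ => by ring
    have hquadexp : (∑ i, ((X.mulVec bstar + e) i - X.mulVec (fun j => m j - t * d j) i) ^ 2)
        = S1 + 2 * t * (S2 - S3) + t ^ 2 * S3 := by
      have per : ∀ i ∈ Finset.univ,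
          ((X.mulVec bstar + e) i - X.mulVec (fun j => m j - t * d j) i) ^ 2
          = ((X.mulVec bstar + e) i - X.mulVec m i) ^ 2
            + 2 * t * (e i * X.mulVec d i - (X.mulVec d i) ^ 2)
            + t ^ 2 * (X.mulVec d i) ^ 2 := by
        intro i _
        rw [hXb i]
        have h2 := hXd i
        simp only [Pi.add_apply]
        linear_combination 2 * t * (X.mulVec d i) * h2
      rw [Finset.sum_congr rfl per, Finset.sum_add_distrib, Finset.sum_add_distrib,
        ← Finset.mul_sum, ← Finset.mul_sum, ← Finset.sum_sub_distrib]
    have hl2exp : (∑ j, (m j - t * d j) ^ 2) = (∑ j, (m j) ^ 2) - 2 * t * S4 + t ^ 2 * S6 := by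
      have per : ∀ j ∈ Finset.univ, (m j - t * d j) ^ 2
          = (m j) ^ 2 + (- (2 * t) * (m j * d j) + t ^ 2 * d j ^ 2) := fun j _ => by ring
      rw [Finset.sum_congr rfl per, Finset.sum_add_distrib, Finset.sum_add_distrib,
        ← Finset.mul_sum, ← Finset.mul_sum]
      ring
    have hpen : (∑ j, wv j * |m j - t * d j|) ≤ (1 - t) * Pm + t * Pb := by
      rw [hPm, hPb, Finset.mul_sum, Finset.mul_sum, ← Finset.sum_add_distrib]
      apply Finset.sum_le_sum
      intro j _
      have habs : |m j - t * d j| ≤ (1 - t) * |m j| + t * |bstar j| := by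
        have : m j - t * d j = (1 - t) * m j + t * bstar j := by simp [hd]; ring
        rw [this]
        calc |(1 - t) * m j + t * bstar j| ≤ |(1 - t) * m j| + |t * bstar j| := abs_add_le _ _
        _ = (1 - t) * |m j| + t * |bstar j| := by
            rw [abs_mul, abs_mul, abs_of_nonneg (by linarith), abs_of_nonneg ht0.le]
      calc wv j * |m j - t * d j| ≤ wv j * ((1 - t) * |m j| + t * |bstar j|) :=
            mul_le_mul_of_nonneg_left habs (hw j)
      _ = (1 - t) * (wv j * |m j|) + t * (wv j * |bstar j|) := by ring
    rw [hquadexp, hl2exp] at hmin'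
    have hpen' : l1 * ∑ j, wv j * |m j - t * d j| ≤ l1 * ((1 - t) * Pm + t * Pb) :=
      mul_le_mul_of_nonneg_left hpen hl1
    linarith [hmin', hpen']
  -- rewrite S2 and S4
  have hS2' : S2 = ∑ j, a j * d j := by
    rw [hS2]
    have : ∀ i ∈ Finset.univ, e i * X.mulVec d i = ∑ j, e i * (X i j * d j) := by
      intro i _
      simp only [mulVec, dotProduct, Finset.mul_sum]
    rw [Finset.sum_congr rfl this, Finset.sum_comm]
    apply Finset.sum_congr rfl
    intro j _
    rw [ha, Finset.sum_mul]
    exact Finset.sum_congr rfl fun i _ => by ring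
  have hS4' : S4 = S6 + ∑ j, bstar j * d j := by
    rw [hS4, hS6, ← Finset.sum_add_distrib]
    exact Finset.sum_congr rfl fun j _ => by simp [hd]; ring
  -- the penalty bound
  have hPbm : Pb - Pm ≤ ∑ j, v j * d j := by
    rw [hPb, hPm, ← Finset.sum_sub_distrib]
    apply Finset.sum_le_sum
    intro j _
    rw [hv]
    by_cases h : 0 ≤ d j
    · simp only [if_pos h]
      have : |bstar j| - |m j| ≤ |d j| := by
        rw [hd]; simp only
        calc |bstar j| - |m j| ≤ |bstar j - m j| := abs_sub_abs_le_abs_sub _ _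
        _ = |m j - bstar j| := abs_sub_comm _ _
      have h2 : |d j| = d j := abs_of_nonneg h
      nlinarith [hw j, this, abs_nonneg (m j)]
    · simp only [if_neg h]
      push_neg at h
      have : |bstar j| - |m j| ≤ |d j| := by
        calc |bstar j| - |m j| ≤ |bstar j - m j| := abs_sub_abs_le_abs_sub _ _
        _ = |m j - bstar j| := abs_sub_comm _ _
      have h2 : |d j| = -d j := abs_of_neg h
      nlinarith [hw j, this]
  -- assemble: 2*S3 + 2*l2*S6 ≤ ∑ c d
  set c : Fin p → ℝ := fun j => 2 * a j - 2 * l2 * bstar j + l1 * v j with hc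
  have hcd : ∑ j, c j * d j
      = 2 * (∑ j, a j * d j) - 2 * l2 * (∑ j, bstar j * d j) + l1 * (∑ j, v j * d j) := by
    simp only [Finset.mul_sum]
    rw [← Finset.sum_sub_distrib, ← Finset.sum_add_distrib]
    exact Finset.sum_congr rfl fun j _ => by simp [hc]; ring
  have hmain : 2 * S3 + 2 * l2 * S6 ≤ ∑ j, c j * d j := by
    rw [hcd]
    have h1 : l1 * (Pb - Pm) ≤ l1 * (∑ j, v j * d j) := mul_le_mul_of_nonneg_left hPbm hl1
    rw [hS2'] at hL
    rw [hS4'] at hL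
    linarith [hL, h1]
  -- quadratic lower bound
  have hq := hquad d
  rw [← hS6, ← hS3] at hq
  have hKS : 2 * (K + l2) * S6 ≤ ∑ j, c j * d j := by linarith [hmain, hq]
  -- Cauchy-Schwarz
  have hCS := Finset.sum_mul_sq_le_sq_mul_sq Finset.univ c d
  -- bound on ∑ c^2
  have hc2 : ∑ j, c j ^ 2 ≤ 12 * (∑ j, a j ^ 2) + 12 * l2 ^ 2 * (∑ j, (bstar j) ^ 2)
      + 3 * l1 ^ 2 * (∑ j, wv j ^ 2) := by
    have per : ∀ j ∈ Finset.univ, c j ^ 2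
        ≤ 12 * a j ^ 2 + 12 * l2 ^ 2 * (bstar j) ^ 2 + 3 * l1 ^ 2 * wv j ^ 2 := by
      intro j _
      have hvj : v j ^ 2 = wv j ^ 2 := by
        rw [hv]; by_cases h : 0 ≤ d j <;> simp [h]
      rw [hc]
      simp only
      nlinarith [sq_nonneg (2 * a j + 2 * l2 * bstar j), sq_nonneg (2 * l2 * bstar j + l1 * v j),
        sq_nonneg (2 * a j - l1 * v j), hvj]
    calc ∑ j, c j ^ 2 ≤ ∑ j, (12 * a j ^ 2 + 12 * l2 ^ 2 * (bstar j) ^ 2 + 3 * l1 ^ 2 * wv j ^ 2) :=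
          Finset.sum_le_sum per
    _ = _ := by rw [Finset.sum_add_distrib, Finset.sum_add_distrib,
          ← Finset.mul_sum, ← Finset.mul_sum, ← Finset.mul_sum]
  -- conclude
  have hKl2 : 0 < K + l2 := by linarith
  rcases eq_or_lt_of_le hS6nn with h0 | hpos
  · rw [← h0, mul_zero]
    have h1 : 0 ≤ ∑ j, a j ^ 2 := Finset.sum_nonneg fun j _ => sq_nonneg _
    have h2 : 0 ≤ ∑ j, (bstar j) ^ 2 := Finset.sum_nonneg fun j _ => sq_nonneg _
    have h3 : 0 ≤ ∑ j, wv j ^ 2 := Finset.sum_nonneg fun j _ => sq_nonneg _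
    linarith [mul_nonneg (sq_nonneg l2) h2, mul_nonneg (sq_nonneg l1) h3, h1]
  · have hnn0 : 0 ≤ 2 * (K + l2) * S6 := mul_nonneg (by linarith) hS6nn
    have hcdnn : 0 ≤ ∑ j, c j * d j := le_trans hnn0 hKS
    have hsq : (2 * (K + l2) * S6) ^ 2 ≤ (∑ j, c j * d j) ^ 2 :=
      sq_le_sq' (by linarith) hKS
    have h4 : 4 * (K + l2) ^ 2 * S6 ^ 2 ≤
        (12 * (∑ j, a j ^ 2) + 12 * l2 ^ 2 * (∑ j, (bstar j) ^ 2)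
          + 3 * l1 ^ 2 * (∑ j, wv j ^ 2)) * S6 := by
      calc 4 * (K + l2) ^ 2 * S6 ^ 2 = (2 * (K + l2) * S6) ^ 2 := by ring
      _ ≤ (∑ j, c j * d j) ^ 2 := hsq
      _ ≤ (∑ j, c j ^ 2) * S6 := hCS
      _ ≤ _ := mul_le_mul_of_nonneg_right hc2 hS6nn
    have h5 : (4 * (K + l2) ^ 2 * S6) * S6 ≤ (12 * (∑ j, a j ^ 2)
        + 12 * l2 ^ 2 * (∑ j, (bstar j) ^ 2) + 3 * l1 ^ 2 * (∑ j, wv j ^ 2)) * S6 := by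
      calc (4 * (K + l2) ^ 2 * S6) * S6 = 4 * (K + l2) ^ 2 * S6 ^ 2 := by ring
      _ ≤ _ := h4
    have := (mul_le_mul_iff_left₀ hpos).mp h5
    linarith

/-- Theorem 3.1 (nonasymptotic risk bound for the weighted elastic-net).
In the linear model `y = Xβ* + ε` with `E ε = 0`, `Cov ε = σ² I`, and
`bn ≤ λ_min(XᵀX) ≤ λ_max(XᵀX) ≤ Bn`, the weighted elastic-net estimator satisfies
`E‖β̂w - β*‖₂² ≤ 4 (λ₂²‖β*‖₂² + Bpnσ² + λ₁² E[∑ ŵ_j²]) / (bn + λ₂)²`. -/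
theorem stmt_7 {n p : ℕ} (hn : 0 < n) (hp : 0 < p)
    {Ω : Type*} [MeasureSpace Ω] (μ : Measure Ω) [IsProbabilityMeasure μ]
    (X : Matrix (Fin n) (Fin p) ℝ) (hH : (Xᵀ * X).IsHermitian)
    (b B : ℝ) (hb : 0 < b) (hbB : b ≤ B)
    (heigLB : ∀ i, b * n ≤ hH.eigenvalues i)
    (heigUB : ∀ i, hH.eigenvalues i ≤ B * n)
    (l2 l1 : ℝ) (hl2 : 0 ≤ l2) (hl1 : 0 ≤ l1)
    (bstar : Fin p → ℝ) (σ : ℝ)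
    (eps : Ω → Fin n → ℝ)
    (hint1 : ∀ i, Integrable (fun ω => eps ω i) μ)
    (hint2 : ∀ i j, Integrable (fun ω => eps ω i * eps ω j) μ)
    (hmean : ∀ i, ∫ ω, eps ω i ∂μ = 0)
    (hcov : ∀ i j, ∫ ω, eps ω i * eps ω j ∂μ = if i = j then σ ^ 2 else 0)
    (w : Ω → Fin p → ℝ) (hw : ∀ ω j, 0 ≤ w ω j)
    (bw : Ω → Fin p → ℝ)
    (hbw : ∀ ω, ∀ β : Fin p → ℝ,
      (∑ i, ((X.mulVec bstar + eps ω) i - X.mulVec (bw ω) i) ^ 2)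
          + l2 * ∑ j, (bw ω j) ^ 2 + l1 * ∑ j, w ω j * |bw ω j| ≤
        (∑ i, ((X.mulVec bstar + eps ω) i - X.mulVec β i) ^ 2)
          + l2 * ∑ j, (β j) ^ 2 + l1 * ∑ j, w ω j * |β j|)
    (hintmse : Integrable (fun ω => ∑ j, (bw ω j - bstar j) ^ 2) μ)
    (hintw : Integrable (fun ω => ∑ j, (w ω j) ^ 2) μ) :
    ∫ ω, ∑ j, (bw ω j - bstar j) ^ 2 ∂μ ≤
      4 * (l2 ^ 2 * ∑ j, (bstar j) ^ 2 + B * p * n * σ ^ 2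
            + l1 ^ 2 * ∫ ω, ∑ j, (w ω j) ^ 2 ∂μ) / (b * n + l2) ^ 2 := by
  have hn' : (0:ℝ) < (n : ℝ) := by exact_mod_cast hn
  have hK : 0 < b * (n : ℝ) := mul_pos hb hn'
  have hquad : ∀ x : Fin p → ℝ, b * (n:ℝ) * ∑ j, x j ^ 2 ≤ ∑ i, X.mulVec x i ^ 2 :=
    quadLB X hH (b * (n:ℝ)) heigLB
  have hpt : ∀ ω, (b * (n:ℝ) + l2) ^ 2 * ∑ j, (bw ω j - bstar j) ^ 2 ≤
      3 * ∑ j, (∑ i, X i j * eps ω i) ^ 2 + 3 * l2 ^ 2 * ∑ j, (bstar j) ^ 2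
        + (3 / 4) * l1 ^ 2 * ∑ j, (w ω j) ^ 2 :=
    fun ω => pointwise_bound X (b * (n:ℝ)) l2 l1 hK hl2 hl1 bstar (bw ω) (eps ω) (w ω)
      (hw ω) hquad (hbw ω)
  -- trace bound
  have hTle : (∑ j, ∑ i, X i j ^ 2) ≤ B * n * p := by
    rw [traceEq X hH]
    calc ∑ j, hH.eigenvalues j ≤ ∑ _j : Fin p, B * (n:ℝ) :=
          Finset.sum_le_sum fun i _ => heigUB i
    _ = (p : ℝ) * (B * (n:ℝ)) := by rw [Finset.sum_const]; simp [mul_comm]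
    _ = B * n * p := by ring
  -- integrability and value of the noise term
  have heqA : (fun ω => ∑ j, (∑ i, X i j * eps ω i) ^ 2)
      = fun ω => ∑ j : Fin p, ∑ i : Fin n, ∑ k : Fin n,
          (X i j * X k j) * (eps ω i * eps ω k) := by
    funext ω
    refine Finset.sum_congr rfl fun j _ => ?_
    rw [sq, Finset.sum_mul_sum]
    exact Finset.sum_congr rfl fun i _ => Finset.sum_congr rfl fun k _ => by ring
  have hAint : Integrable (fun ω => ∑ j, (∑ i, X i j * eps ω i) ^ 2) μ := by
    rw [heqA]
    exact integrable_finset_sum _ fun j _ => integrable_finset_sum _ fun i _ =>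
      integrable_finset_sum _ fun k _ => (hint2 i k).const_mul _
  have hAval : ∫ ω, ∑ j, (∑ i, X i j * eps ω i) ^ 2 ∂μ = σ ^ 2 * ∑ j, ∑ i, X i j ^ 2 := by
    rw [heqA]
    rw [integral_finset_sum _ (fun j _ => integrable_finset_sum _ fun i _ =>
      integrable_finset_sum _ fun k _ => (hint2 i k).const_mul _)]
    have hj : ∀ j ∈ Finset.univ, (∫ ω, ∑ i : Fin n, ∑ k : Fin n,
        (X i j * X k j) * (eps ω i * eps ω k) ∂μ) = ∑ i : Fin n, X i j ^ 2 * σ ^ 2 := by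
      intro j _
      rw [integral_finset_sum _ (fun i _ => integrable_finset_sum _ fun k _ =>
        (hint2 i k).const_mul _)]
      refine Finset.sum_congr rfl fun i _ => ?_
      rw [integral_finset_sum _ (fun k _ => (hint2 i k).const_mul _)]
      have hk : ∀ k ∈ Finset.univ, (∫ ω, (X i j * X k j) * (eps ω i * eps ω k) ∂μ)
          = (X i j * X k j) * (if i = k then σ ^ 2 else 0) := by
        intro k _
        rw [integral_const_mul, hcov i k]
      rw [Finset.sum_congr rfl hk]
      simp [mul_ite, mul_zero, Finset.sum_ite_eq, sq]
    rw [Finset.sum_congr rfl hj, Finset.mul_sum]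
    exact Finset.sum_congr rfl fun j _ => by rw [Finset.mul_sum]; exact Finset.sum_congr rfl fun i _ => by ring
  -- pass to the integral
  have hconst : (0:ℝ) < (b * (n:ℝ) + l2) ^ 2 := by positivity
  have h1int : Integrable (fun ω => 3 * (∑ j, (∑ i, X i j * eps ω i) ^ 2)
      + 3 * l2 ^ 2 * ∑ j, (bstar j) ^ 2) μ := (hAint.const_mul 3).add (integrable_const _)
  have h2int : Integrable (fun ω => (3 / 4) * l1 ^ 2 * ∑ j, (w ω j) ^ 2) μ :=
    hintw.const_mul _
  have hGint : Integrable (fun ω => ((b * (n:ℝ) + l2) ^ 2)⁻¹ *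
      ((3 * (∑ j, (∑ i, X i j * eps ω i) ^ 2) + 3 * l2 ^ 2 * ∑ j, (bstar j) ^ 2)
        + (3 / 4) * l1 ^ 2 * ∑ j, (w ω j) ^ 2)) μ := (h1int.add h2int).const_mul _
  have hmono : ∫ ω, ∑ j, (bw ω j - bstar j) ^ 2 ∂μ ≤
      ∫ ω, ((b * (n:ℝ) + l2) ^ 2)⁻¹ *
        ((3 * (∑ j, (∑ i, X i j * eps ω i) ^ 2) + 3 * l2 ^ 2 * ∑ j, (bstar j) ^ 2)
          + (3 / 4) * l1 ^ 2 * ∑ j, (w ω j) ^ 2) ∂μ := by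
    refine integral_mono hintmse hGint fun ω => ?_
    have h := hpt ω
    rw [← mul_le_mul_iff_right₀ hconst, ← mul_assoc, mul_inv_cancel₀ (ne_of_gt hconst), one_mul]
    linarith
  have hGval : ∫ ω, ((b * (n:ℝ) + l2) ^ 2)⁻¹ *
      ((3 * (∑ j, (∑ i, X i j * eps ω i) ^ 2) + 3 * l2 ^ 2 * ∑ j, (bstar j) ^ 2)
        + (3 / 4) * l1 ^ 2 * ∑ j, (w ω j) ^ 2) ∂μ
      = ((b * (n:ℝ) + l2) ^ 2)⁻¹ *
        ((3 * (σ ^ 2 * ∑ j, ∑ i, X i j ^ 2) + 3 * l2 ^ 2 * ∑ j, (bstar j) ^ 2)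
          + (3 / 4) * l1 ^ 2 * ∫ ω, ∑ j, (w ω j) ^ 2 ∂μ) := by
    rw [integral_const_mul, integral_add h1int h2int, integral_add (hAint.const_mul 3)
      (integrable_const _), integral_const_mul, hAval, integral_const, integral_const_mul]
    simp
  -- final numeric comparison
  have hIW : 0 ≤ ∫ ω, ∑ j, (w ω j) ^ 2 ∂μ :=
    integral_nonneg fun ω => Finset.sum_nonneg fun j _ => sq_nonneg _
  have hSb : 0 ≤ ∑ j, (bstar j) ^ 2 := Finset.sum_nonneg fun j _ => sq_nonneg _
  have hσT : σ ^ 2 * (∑ j, ∑ i, X i j ^ 2) ≤ σ ^ 2 * (B * n * p) :=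
    mul_le_mul_of_nonneg_left hTle (sq_nonneg σ)
  have hfin : ((b * (n:ℝ) + l2) ^ 2)⁻¹ *
      ((3 * (σ ^ 2 * ∑ j, ∑ i, X i j ^ 2) + 3 * l2 ^ 2 * ∑ j, (bstar j) ^ 2)
        + (3 / 4) * l1 ^ 2 * ∫ ω, ∑ j, (w ω j) ^ 2 ∂μ) ≤
      4 * (l2 ^ 2 * ∑ j, (bstar j) ^ 2 + B * p * n * σ ^ 2
            + l1 ^ 2 * ∫ ω, ∑ j, (w ω j) ^ 2 ∂μ) / (b * n + l2) ^ 2 := by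
    rw [le_div_iff₀ hconst]
    have hcancel : (((b * (n:ℝ) + l2) ^ 2)⁻¹ *
        ((3 * (σ ^ 2 * ∑ j, ∑ i, X i j ^ 2) + 3 * l2 ^ 2 * ∑ j, (bstar j) ^ 2)
          + (3 / 4) * l1 ^ 2 * ∫ ω, ∑ j, (w ω j) ^ 2 ∂μ)) * (b * (n:ℝ) + l2) ^ 2
        = (3 * (σ ^ 2 * ∑ j, ∑ i, X i j ^ 2) + 3 * l2 ^ 2 * ∑ j, (bstar j) ^ 2)
          + (3 / 4) * l1 ^ 2 * ∫ ω, ∑ j, (w ω j) ^ 2 ∂μ := by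
      field_simp
    rw [hcancel]
    have hl2Sb : 0 ≤ l2 ^ 2 * ∑ j, (bstar j) ^ 2 := mul_nonneg (sq_nonneg l2) hSb
    have hl1IW : 0 ≤ l1 ^ 2 * ∫ ω, ∑ j, (w ω j) ^ 2 ∂μ := mul_nonneg (sq_nonneg l1) hIW
    have hB : 0 < B := lt_of_lt_of_le hb hbB
    have hBn : 0 ≤ σ ^ 2 * (B * (n:ℝ) * (p:ℝ)) :=
      mul_nonneg (sq_nonneg σ) (mul_nonneg (mul_nonneg hB.le hn'.le) (Nat.cast_nonneg p))
    nlinarith [hσT]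
  calc ∫ ω, ∑ j, (bw ω j - bstar j) ^ 2 ∂μ ≤ _ := hmono
  _ = _ := hGval
  _ ≤ _ := hfin
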